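/- arXiv:1907.13110 — 3 statements merged into one kernel-verified Lean document; each statement's English description precedes it below -/
import Mathlib

section
/- Let c ≥ 2, ñ ≥ 3, n = cñ, and let G be the c-barbell graph with Laplacian matrix L. Then: (a) for every bridge edge (kñ, kñ+1), k = 1,…,c−1, there exists v ∈ ℝⁿ with L v = e_{kñ} − e_{kñ+1}, and every such v satisfies v_{kñ} − v_{kñ+1} = 1 (i.e., the effective resistance of every bridge edge equals 1); (b) for every edge (i,j) with both endpoints in the same complete block, there exists v ∈ ℝⁿ with L v = e_i − e_j, and every such v satisfies v_i − v_j = 2/ñ (i.e., the effective resistance of every clique edge equals 2/ñ). -/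
open Matrix BigOperators Finset

/-- The `c`-barbell graph on `c*tn` vertices (0-indexed): for each `k = 0,…,c−1` the block
`B_k = {k*tn,…,(k+1)*tn−1}` induces a complete graph (two vertices are in the same block iff
their values have the same quotient by `tn`), and for each `k = 1,…,c−1` there is a bridge edge
between vertex `k*tn − 1` and vertex `k*tn` (i.e. between consecutive vertices `i, i+1` with
`(i+1) % tn = 0`). -/
def cBarbell (c tn : ℕ) : SimpleGraph (Fin (c * tn)) where
  Adj i j := i ≠ j ∧ (i.val / tn = j.val / tn ∨
    (j.val = i.val + 1 ∧ (i.val + 1) % tn = 0) ∨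
    (i.val = j.val + 1 ∧ (j.val + 1) % tn = 0))
  symm := by
    constructor
    rintro i j ⟨hne, h⟩
    refine ⟨hne.symm, ?_⟩
    rcases h with h | h | h
    · exact Or.inl h.symm
    · exact Or.inr (Or.inr h)
    · exact Or.inr (Or.inl h)
  loopless := by constructor; rintro i ⟨hne, -⟩; exact hne rfl

instance (c tn : ℕ) : DecidableRel (cBarbell c tn).Adj := fun i j =>
  inferInstanceAs (Decidable (i ≠ j ∧ (i.val / tn = j.val / tn ∨
    (j.val = i.val + 1 ∧ (i.val + 1) % tn = 0) ∨
    (i.val = j.val + 1 ∧ (j.val + 1) % tn = 0))))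

/-- The standard basis vector `e i` of `ℝⁿ`. -/
def stdBasisVec {n : ℕ} (i : Fin n) : Fin n → ℝ := fun k => if k = i then 1 else 0

/-! ### Auxiliary lemmas -/

lemma cBarbell_adj_iff (c tn : ℕ) (x y : Fin (c * tn)) :
    (cBarbell c tn).Adj x y ↔ x ≠ y ∧ (x.val / tn = y.val / tn ∨
      (y.val = x.val + 1 ∧ (x.val + 1) % tn = 0) ∨
      (x.val = y.val + 1 ∧ (y.val + 1) % tn = 0)) := Iff.rfl

lemma nat_div_eq_iff' {tn : ℕ} (h0 : 0 < tn) (k m : ℕ) :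
    m / tn = k ↔ k * tn ≤ m ∧ m < k * tn + tn := by
  constructor
  · rintro rfl
    refine ⟨Nat.div_mul_le_self m tn, ?_⟩
    have h1 := Nat.div_add_mod m tn
    have h2 := Nat.mod_lt m h0
    have h3 : tn * (m / tn) = m / tn * tn := Nat.mul_comm _ _
    omega
  · rintro ⟨h1, h2⟩
    exact Nat.div_eq_of_lt_le h1 (by rw [add_mul, one_mul]; omega)

lemma lap_mulVec {V : Type*} [Fintype V] [DecidableEq V] (G : SimpleGraph V) [DecidableRel G.Adj]
    (v : V → ℝ) (x : V) :
    (G.lapMatrix ℝ *ᵥ v) x = ∑ y, if G.Adj x y then v x - v y else 0 := by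
  rw [SimpleGraph.lapMatrix_mulVec_apply, SimpleGraph.degree_eq_sum_if_adj]
  have h1 : ∑ u ∈ G.neighborFinset x, v u = ∑ y, if G.Adj x y then v y else 0 := by
    rw [← Finset.sum_filter]
    congr 1
    ext y
    simp [SimpleGraph.mem_neighborFinset]
  rw [h1, Finset.sum_mul, ← Finset.sum_sub_distrib]
  congr 1; ext y
  split_ifs <;> ring

/-- potential vector for a bridge edge: `1` left of the cut at `j`, `0` right of it. -/
def bridgeVec {n : ℕ} (j : Fin n) : Fin n → ℝ := fun x => if x.val < j.val then 1 else 0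

lemma bridgeVec_lap (c tn : ℕ) (htn : 3 ≤ tn) (i j : Fin (c * tn))
    (hj : j.val = i.val + 1) (hmod : (i.val + 1) % tn = 0) :
    (cBarbell c tn).lapMatrix ℝ *ᵥ bridgeVec j = stdBasisVec i - stdBasisVec j := by
  have htn0 : 0 < tn := by omega
  have hdvd : tn ∣ j.val := Nat.dvd_of_mod_eq_zero (by rw [hj]; exact hmod)
  have hij : i ≠ j := Fin.ne_of_val_ne (by omega)
  funext x
  rw [lap_mulVec]
  have hdiv : ∀ m : ℕ, m < j.val ↔ m / tn < j.val / tn := by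
    intro m
    rw [Nat.div_lt_iff_lt_mul htn0, Nat.div_mul_cancel hdvd]
  have key : ∀ y, (if (cBarbell c tn).Adj x y then bridgeVec j x - bridgeVec j y else 0)
      = (if x = i ∧ y = j then (1:ℝ) else 0) - (if x = j ∧ y = i then 1 else 0) := by
    intro y
    by_cases hadj : (cBarbell c tn).Adj x y
    · rw [if_pos hadj]
      obtain ⟨hne, hcase⟩ := (cBarbell_adj_iff c tn x y).mp hadj
      rcases hcase with hb | ⟨hb1, hb2⟩ | ⟨hb1, hb2⟩
      · -- same block
        have hvv : bridgeVec j x = bridgeVec j y := by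
          have hiff : x.val < j.val ↔ y.val < j.val := by
            rw [hdiv x.val, hdiv y.val, hb]
          exact if_congr hiff rfl rfl
        have h1 : ¬(x = i ∧ y = j) := by
          rintro ⟨rfl, rfl⟩
          have := (hdiv x.val).mp (by omega)
          omega
        have h2 : ¬(x = j ∧ y = i) := by
          rintro ⟨rfl, rfl⟩
          have := (hdiv y.val).mp (by omega)
          omega
        simp [hvv, h1, h2]
      · -- bridge, y = x + 1
        by_cases hcr : x.val + 1 = j.val
        · have hx : x = i := Fin.ext (by omega)
          have hy : y = j := Fin.ext (by omega)
          simp only [bridgeVec]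
          rw [if_pos (show x.val < j.val by omega), if_neg (show ¬(y.val < j.val) by omega),
            if_pos ⟨hx, hy⟩, if_neg (show ¬(x = j ∧ y = i) by rintro ⟨rfl, rfl⟩; omega)]
        · have hvv : bridgeVec j x = bridgeVec j y := by
            have hiff : x.val < j.val ↔ y.val < j.val := by omega
            exact if_congr hiff rfl rfl
          have h1 : ¬(x = i ∧ y = j) := by rintro ⟨rfl, rfl⟩; omega
          have h2 : ¬(x = j ∧ y = i) := by rintro ⟨rfl, rfl⟩; omega
          simp [hvv, h1, h2]
      · -- bridge, x = y + 1
        by_cases hcr : y.val + 1 = j.val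
        · have hy : y = i := Fin.ext (by omega)
          have hx : x = j := Fin.ext (by omega)
          simp only [bridgeVec]
          rw [if_neg (show ¬(x.val < j.val) by omega), if_pos (show y.val < j.val by omega),
            if_neg (show ¬(x = i ∧ y = j) by rintro ⟨rfl, rfl⟩; omega), if_pos ⟨hx, hy⟩]
        · have hvv : bridgeVec j x = bridgeVec j y := by
            have hiff : x.val < j.val ↔ y.val < j.val := by omega
            exact if_congr hiff rfl rfl
          have h1 : ¬(x = i ∧ y = j) := by rintro ⟨rfl, rfl⟩; omega
          have h2 : ¬(x = j ∧ y = i) := by rintro ⟨rfl, rfl⟩; omega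
          simp [hvv, h1, h2]
    · rw [if_neg hadj]
      have h1 : ¬(x = i ∧ y = j) := by
        rintro ⟨rfl, rfl⟩
        exact hadj ⟨Fin.ne_of_val_ne (by omega), Or.inr (Or.inl ⟨hj, hmod⟩)⟩
      have h2 : ¬(x = j ∧ y = i) := by
        rintro ⟨rfl, rfl⟩
        exact hadj (((cBarbell c tn).symm.symm _ _) ⟨Fin.ne_of_val_ne (by omega),
          Or.inr (Or.inl ⟨hj, hmod⟩)⟩)
      simp [h1, h2]
  rw [Finset.sum_congr rfl fun y _ => key y, Finset.sum_sub_distrib]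
  have s1 : ∑ y : Fin (c * tn), (if x = i ∧ y = j then (1:ℝ) else 0)
      = if x = i then 1 else 0 := by
    by_cases hx : x = i <;> simp [hx]
  have s2 : ∑ y : Fin (c * tn), (if x = j ∧ y = i then (1:ℝ) else 0)
      = if x = j then 1 else 0 := by
    by_cases hx : x = j <;> simp [hx]
  rw [s1, s2]
  simp [stdBasisVec]

/-- potential vector for a clique vertex `a`: indicator of "clamp to block of `a` equals `a`". -/
def blockVec {n : ℕ} (tn : ℕ) (a : Fin n) : Fin n → ℝ :=
  fun x => if max (a.val / tn * tn) (min x.val (a.val / tn * tn + (tn - 1))) = a.val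
    then 1 else 0

lemma blockVec_bridge (c tn : ℕ) (htn0 : 0 < tn) (a x y : Fin (c * tn))
    (h1 : y.val = x.val + 1) (h2 : (x.val + 1) % tn = 0) :
    blockVec tn a x = blockVec tn a y ∧ ¬(x = a ∧ y.val / tn = a.val / tn) ∧
      ¬(y = a ∧ x.val / tn = a.val / tn) := by
  obtain ⟨d, hd⟩ := Nat.dvd_of_mod_eq_zero h2
  have hyd : y.val / tn = d := by
    refine (nat_div_eq_iff' htn0 d y.val).mpr ?_
    have := Nat.mul_comm tn d
    omega
  have hKa := (nat_div_eq_iff' htn0 (a.val / tn) a.val).mp rfl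
  have hcomm : tn * (a.val / tn) = a.val / tn * tn := Nat.mul_comm _ _
  refine ⟨?_, ?_, ?_⟩
  · -- blockVec values agree across the bridge
    have hqq : max (a.val / tn * tn) (min x.val (a.val / tn * tn + (tn - 1)))
        = max (a.val / tn * tn) (min y.val (a.val / tn * tn + (tn - 1))) := by
      have hsplit : d < a.val / tn ∨ d = a.val / tn ∨ d = a.val / tn + 1 ∨
          a.val / tn + 2 ≤ d := by omega
      rcases hsplit with h | h | h | h
      · have hylt : y.val < a.val / tn * tn :=
          (Nat.div_lt_iff_lt_mul htn0).mp (by omega)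
        omega
      · have : tn * d = a.val / tn * tn := by rw [h, Nat.mul_comm]
        omega
      · have : tn * d = a.val / tn * tn + tn := by rw [h, Nat.mul_comm, add_mul, one_mul]
        omega
      · have hge : (a.val / tn + 1) * tn ≤ y.val :=
          (Nat.le_div_iff_mul_le htn0).mp (by omega)
        have : (a.val / tn + 1) * tn = a.val / tn * tn + tn := by rw [add_mul, one_mul]
        omega
    simp only [blockVec, hqq]
  · rintro ⟨rfl, hyk⟩
    obtain rfl : d = x.val / tn := by omega
    omega
  · rintro ⟨rfl, hxk⟩
    have hx := (nat_div_eq_iff' htn0 (y.val / tn) x.val).mp hxk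
    obtain rfl : d = y.val / tn := by omega
    omega

lemma blockVec_lap (c tn : ℕ) (htn : 3 ≤ tn) (a : Fin (c * tn)) :
    (cBarbell c tn).lapMatrix ℝ *ᵥ blockVec tn a =
      fun x => tn * (if x = a then (1:ℝ) else 0) -
        (if x.val / tn = a.val / tn then 1 else 0) := by
  have htn0 : 0 < tn := by omega
  have hKa := (nat_div_eq_iff' htn0 (a.val / tn) a.val).mp rfl
  have hu : ∀ x : Fin (c * tn), blockVec tn a x =
      if max (a.val / tn * tn) (min x.val (a.val / tn * tn + (tn - 1))) = a.val
      then (1:ℝ) else 0 := fun _ => rfl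
  funext x
  rw [lap_mulVec]
  have key : ∀ y : Fin (c * tn),
      (if (cBarbell c tn).Adj x y then blockVec tn a x - blockVec tn a y else 0)
      = (if x = a ∧ y.val / tn = a.val / tn then (1:ℝ) else 0)
        - (if y = a ∧ x.val / tn = a.val / tn then 1 else 0) := by
    intro y
    by_cases hadj : (cBarbell c tn).Adj x y
    · rw [if_pos hadj]
      obtain ⟨hne, hcase⟩ := (cBarbell_adj_iff c tn x y).mp hadj
      rcases hcase with hb | ⟨hb1, hb2⟩ | ⟨hb1, hb2⟩
      · -- same block
        rcases Nat.lt_trichotomy (x.val / tn) (a.val / tn) with h | h | h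
        · have hx := (Nat.div_lt_iff_lt_mul htn0).mp h
          have hy := (Nat.div_lt_iff_lt_mul htn0).mp (show y.val / tn < a.val / tn by omega)
          have hqq : max (a.val / tn * tn) (min x.val (a.val / tn * tn + (tn - 1)))
              = max (a.val / tn * tn) (min y.val (a.val / tn * tn + (tn - 1))) := by omega
          have hn1 : ¬(x = a ∧ y.val / tn = a.val / tn) := by rintro ⟨rfl, -⟩; omega
          have hn2 : ¬(y = a ∧ x.val / tn = a.val / tn) := by rintro ⟨rfl, -⟩; omega
          rw [hu x, hu y, hqq, if_neg hn1, if_neg hn2]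
          simp
        · have hxb := (nat_div_eq_iff' htn0 (a.val / tn) x.val).mp h
          have hyb := (nat_div_eq_iff' htn0 (a.val / tn) y.val).mp (by omega)
          have hqx : max (a.val / tn * tn) (min x.val (a.val / tn * tn + (tn - 1)))
              = x.val := by omega
          have hqy : max (a.val / tn * tn) (min y.val (a.val / tn * tn + (tn - 1)))
              = y.val := by omega
          have hyk : y.val / tn = a.val / tn := by omega
          rw [hu x, hu y, hqx, hqy]
          simp only [h, hyk, and_true, Fin.ext_iff]
        · have hx := (Nat.le_div_iff_mul_le htn0).mp (show a.val / tn + 1 ≤ x.val / tn by omega)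
          have hy := (Nat.le_div_iff_mul_le htn0).mp (show a.val / tn + 1 ≤ y.val / tn by omega)
          have hmul : (a.val / tn + 1) * tn = a.val / tn * tn + tn := by rw [add_mul, one_mul]
          have hqq : max (a.val / tn * tn) (min x.val (a.val / tn * tn + (tn - 1)))
              = max (a.val / tn * tn) (min y.val (a.val / tn * tn + (tn - 1))) := by omega
          have hn1 : ¬(x = a ∧ y.val / tn = a.val / tn) := by rintro ⟨rfl, -⟩; omega
          have hn2 : ¬(y = a ∧ x.val / tn = a.val / tn) := by rintro ⟨rfl, -⟩; omega
          rw [hu x, hu y, hqq, if_neg hn1, if_neg hn2]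
          simp
      · obtain ⟨he, hn1, hn2⟩ := blockVec_bridge c tn htn0 a x y hb1 hb2
        rw [he, if_neg hn1, if_neg hn2]
        simp
      · obtain ⟨he, hn1, hn2⟩ := blockVec_bridge c tn htn0 a y x hb1 hb2
        rw [he, if_neg hn2, if_neg hn1]
        simp
    · rw [if_neg hadj]
      by_cases hxy : x = y
      · subst hxy
        rw [sub_self]
      · have hn1 : ¬(x = a ∧ y.val / tn = a.val / tn) := by
          rintro ⟨rfl, hyk⟩
          exact hadj ⟨hxy, Or.inl (by omega)⟩
        have hn2 : ¬(y = a ∧ x.val / tn = a.val / tn) := by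
          rintro ⟨rfl, hxk⟩
          exact hadj ⟨hxy, Or.inl (by omega)⟩
        rw [if_neg hn1, if_neg hn2]
        simp
  rw [Finset.sum_congr rfl fun y _ => key y, Finset.sum_sub_distrib]
  have hkc : a.val / tn < c := (Nat.div_lt_iff_lt_mul htn0).mpr a.isLt
  have hbound : ∀ m ∈ Finset.Ico (a.val / tn * tn) (a.val / tn * tn + tn), m < c * tn := by
    intro m hm
    rw [Finset.mem_Ico] at hm
    have h1 : (a.val / tn + 1) * tn ≤ c * tn := Nat.mul_le_mul_right tn (by omega)
    have h2 : (a.val / tn + 1) * tn = a.val / tn * tn + tn := by rw [add_mul, one_mul]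
    omega
  have hcard : (Finset.univ.filter
      (fun y : Fin (c * tn) => y.val / tn = a.val / tn)).card = tn := by
    have hset : Finset.univ.filter (fun y : Fin (c * tn) => y.val / tn = a.val / tn)
        = Finset.attachFin (Finset.Ico (a.val / tn * tn) (a.val / tn * tn + tn)) hbound := by
      ext y
      simp [Finset.mem_attachFin, Finset.mem_Ico, nat_div_eq_iff' htn0]
    rw [hset, Finset.card_attachFin, Nat.card_Ico]
    omega
  have s1 : ∑ y : Fin (c * tn), (if x = a ∧ y.val / tn = a.val / tn then (1:ℝ) else 0)
      = if x = a then (tn:ℝ) else 0 := by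
    by_cases hx : x = a
    · simp only [hx, true_and]
      rw [Finset.sum_boole, hcard]
      simp
    · simp [hx]
  have s2 : ∑ y : Fin (c * tn), (if y = a ∧ x.val / tn = a.val / tn then (1:ℝ) else 0)
      = if x.val / tn = a.val / tn then 1 else 0 := by
    by_cases hx : x.val / tn = a.val / tn <;> simp [hx]
  rw [s1, s2]
  split_ifs <;> ring

theorem stmt3 (c tn : ℕ) (hc : 2 ≤ c) (htn : 3 ≤ tn)
    (L : Matrix (Fin (c * tn)) (Fin (c * tn)) ℝ) (hL : L = (cBarbell c tn).lapMatrix ℝ) :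
    -- (a) the effective resistance of every bridge edge equals `1`
    (∀ i j : Fin (c * tn), j.val = i.val + 1 → (i.val + 1) % tn = 0 →
      (∃ v : Fin (c * tn) → ℝ, L *ᵥ v = stdBasisVec i - stdBasisVec j) ∧
      (∀ v : Fin (c * tn) → ℝ, L *ᵥ v = stdBasisVec i - stdBasisVec j →
        v i - v j = 1)) ∧
    -- (b) the effective resistance of every clique edge equals `2/tn`
    (∀ i j : Fin (c * tn), (cBarbell c tn).Adj i j → i.val / tn = j.val / tn →
      (∃ v : Fin (c * tn) → ℝ, L *ᵥ v = stdBasisVec i - stdBasisVec j) ∧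
      (∀ v : Fin (c * tn) → ℝ, L *ᵥ v = stdBasisVec i - stdBasisVec j →
        v i - v j = 2 / tn)) := by
  subst hL
  have htn0 : 0 < tn := by omega
  -- uniqueness of potential differences across an edge
  have uniq : ∀ (i j : Fin (c * tn)), (cBarbell c tn).Adj i j →
      ∀ v₀ v : Fin (c * tn) → ℝ,
      (cBarbell c tn).lapMatrix ℝ *ᵥ v₀ = stdBasisVec i - stdBasisVec j →
      (cBarbell c tn).lapMatrix ℝ *ᵥ v = stdBasisVec i - stdBasisVec j →
      v i - v j = v₀ i - v₀ j := by
    intro i j hadj v₀ v h₀ h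
    have hz : Matrix.toLin' ((cBarbell c tn).lapMatrix ℝ) (v - v₀) = 0 := by
      rw [Matrix.toLin'_apply, Matrix.mulVec_sub, h, h₀, sub_self]
    have hh := (SimpleGraph.lapMatrix_mulVec_eq_zero_iff_forall_adj
      (cBarbell c tn) (x := v - v₀)).mp (by rwa [Matrix.toLin'_apply] at hz) i j hadj
    simp only [Pi.sub_apply] at hh
    linarith
  constructor
  · -- (a) bridge edges
    intro i j hj hmod
    have hsol := bridgeVec_lap c tn htn i j hj hmod
    have hval : bridgeVec j i - bridgeVec j j = 1 := by
      simp only [bridgeVec]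
      rw [if_pos (show i.val < j.val by omega), if_neg (show ¬(j.val < j.val) by omega)]
      ring
    have hadj : (cBarbell c tn).Adj i j :=
      ⟨Fin.ne_of_val_ne (by omega), Or.inr (Or.inl ⟨hj, hmod⟩)⟩
    refine ⟨⟨bridgeVec j, hsol⟩, fun v hv => ?_⟩
    rw [uniq i j hadj (bridgeVec j) v hsol hv, hval]
  · -- (b) clique edges
    intro i j hadj hq
    have hne : i.val ≠ j.val := fun h => hadj.ne (Fin.ext h)
    set w : Fin (c * tn) → ℝ := (tn:ℝ)⁻¹ • (blockVec tn i - blockVec tn j) with hw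
    have htnne : (tn:ℝ) ≠ 0 := Nat.cast_ne_zero.mpr (by omega)
    have hsol : (cBarbell c tn).lapMatrix ℝ *ᵥ w = stdBasisVec i - stdBasisVec j := by
      rw [hw, Matrix.mulVec_smul, Matrix.mulVec_sub, blockVec_lap c tn htn i,
        blockVec_lap c tn htn j]
      funext x
      have hiff : (if x.val / tn = j.val / tn then (1:ℝ) else 0)
          = (if x.val / tn = i.val / tn then 1 else 0) := by rw [hq]
      simp only [Pi.smul_apply, Pi.sub_apply, smul_eq_mul, stdBasisVec, hiff]
      field_simp
      split_ifs <;> ring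
    have hval : w i - w j = 2 / tn := by
      have hbi := (nat_div_eq_iff' htn0 (i.val / tn) i.val).mp rfl
      have hbj := (nat_div_eq_iff' htn0 (j.val / tn) j.val).mp rfl
      have h1 : blockVec tn i i = 1 := by
        simp only [blockVec]
        rw [if_pos (by omega)]
      have h2 : blockVec tn j i = 0 := by
        simp only [blockVec]
        have hbij := (nat_div_eq_iff' htn0 (j.val / tn) i.val).mp hq
        rw [if_neg (by omega)]
      have h3 : blockVec tn i j = 0 := by
        simp only [blockVec]
        have hbji := (nat_div_eq_iff' htn0 (i.val / tn) j.val).mp hq.symm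
        rw [if_neg (by omega)]
      have h4 : blockVec tn j j = 1 := by
        simp only [blockVec]
        rw [if_pos (by omega)]
      simp only [hw, Pi.smul_apply, Pi.sub_apply, smul_eq_mul, h1, h2, h3, h4]
      field_simp
      norm_num
    refine ⟨⟨w, hsol⟩, fun v hv => ?_⟩
    rw [uniq i j hadj w v hsol hv, hval]
end

section
/- Let ñ ≥ 3, n = 2ñ, and let W̄_{P^r} be the effective-resistance gossiping matrix of the barbell graph K_ñ−K_ñ. Then the second largest eigenvalue of W̄_{P^r} equals 1 − 1/(n−1) + (1/2)·√(S_n^r), where S_n^r = (4n − 8)/(n(n−1)²). -/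
open Matrix BigOperators Finset

/-- The barbell graph `K_tn − K_tn` on `2tn` vertices (0-indexed): the vertices `0,…,tn−1` form a
complete graph, the vertices `tn,…,2tn−1` form a complete graph, and there is one bridge edge
between `i* = tn−1` and `j* = tn`. -/
def barbell (tn : ℕ) : SimpleGraph (Fin (2 * tn)) where
  Adj i j := i ≠ j ∧ ((i.val < tn ↔ j.val < tn) ∨
    (i.val = tn - 1 ∧ j.val = tn) ∨ (i.val = tn ∧ j.val = tn - 1))
  symm := by
    constructor
    rintro i j ⟨hne, h⟩
    refine ⟨hne.symm, ?_⟩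
    tauto
  loopless := by constructor; rintro i ⟨hne, -⟩; exact hne rfl

instance (tn : ℕ) : DecidableRel (barbell tn).Adj := fun i j =>
  inferInstanceAs (Decidable (i ≠ j ∧ ((i.val < tn ↔ j.val < tn) ∨
    (i.val = tn - 1 ∧ j.val = tn) ∨ (i.val = tn ∧ j.val = tn - 1))))

/-- The effective-resistance edge-activation probabilities on the barbell graph with `n = 2tn`:
`1/(2(n−1))` on the bridge edge, `2/(n(n−1))` on clique edges (edges within a block), `0` else. -/
noncomputable def probResBarbell (tn : ℕ) : Matrix (Fin (2 * tn)) (Fin (2 * tn)) ℝ :=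
  Matrix.of fun i j =>
    if (barbell tn).Adj i j then
      (if i.val < tn ↔ j.val < tn then 2 / ((2 * (tn : ℝ)) * (2 * (tn : ℝ) - 1))
       else 1 / (2 * (2 * (tn : ℝ) - 1)))
    else 0

/-- The effective-resistance gossiping matrix `W̄_{P^r} = I − D^r/2 + P^r` of the barbell graph,
where `D^r_{ii} = 2 Σ_j P^r_{ij}`. -/
noncomputable def gossipResBarbell (tn : ℕ) : Matrix (Fin (2 * tn)) (Fin (2 * tn)) ℝ :=
  (1 : Matrix (Fin (2 * tn)) (Fin (2 * tn)) ℝ)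
    - (1 / 2 : ℝ) • Matrix.diagonal (fun i => 2 * ∑ j, probResBarbell tn i j)
    + probResBarbell tn


namespace BarbellAux

noncomputable def pp (tn : ℕ) : ℝ := 2 / ((2*(tn:ℝ)) * (2*(tn:ℝ)-1))
noncomputable def tt (tn : ℕ) : ℝ := 1 / (2*(tn:ℝ)-1)

lemma sum_lt (tn : ℕ) (x : ℝ) :
    ∑ j : Fin (2*tn), (if (j:ℕ) < tn then x else 0) = tn * x := by
  rw [Fin.sum_univ_eq_sum_range (fun k => if k < tn then x else 0) (2*tn)]
  rw [Finset.sum_ite, Finset.sum_const, Finset.sum_const_zero, add_zero]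
  have : (Finset.range (2*tn)).filter (fun k => k < tn) = Finset.range tn := by
    ext k; simp [Finset.mem_filter]; omega
  rw [this, Finset.card_range, nsmul_eq_mul]

lemma sum_ge (tn : ℕ) (x : ℝ) :
    ∑ j : Fin (2*tn), (if (j:ℕ) < tn then 0 else x) = tn * x := by
  rw [Fin.sum_univ_eq_sum_range (fun k => if k < tn then 0 else x) (2*tn)]
  rw [Finset.sum_ite, Finset.sum_const, Finset.sum_const, smul_zero, zero_add]
  have : (Finset.range (2*tn)).filter (fun k => ¬ k < tn) = Finset.Ico tn (2*tn) := by
    ext k; simp [Finset.mem_filter]; omega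
  rw [this, Nat.card_Ico, nsmul_eq_mul]
  have : (2*tn - tn) = tn := by omega
  rw [this]

lemma sum_eqk (tn : ℕ) (k : ℕ) (hk : k < 2*tn) (x : ℝ) :
    ∑ j : Fin (2*tn), (if (j:ℕ) = k then x else 0) = x := by
  have h : ∀ j : Fin (2*tn), (if (j:ℕ) = k then x else 0)
      = (if j = (⟨k, hk⟩ : Fin (2*tn)) then x else 0) := by
    intro j; simp [Fin.ext_iff]
  simp_rw [h]
  simp


lemma prob_entry (tn : ℕ) (htn : 3 ≤ tn) (i j : Fin (2*tn)) :
    probResBarbell tn i j =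
      (if i ≠ j ∧ ((i:ℕ) < tn ↔ (j:ℕ) < tn) then pp tn else 0)
      + (if ((i:ℕ) = tn - 1 ∧ (j:ℕ) = tn) ∨ ((i:ℕ) = tn ∧ (j:ℕ) = tn - 1)
          then tt tn / 2 else 0) := by
  have hne : (2*(tn:ℝ)-1) ≠ 0 := by
    have : (3:ℝ) ≤ (tn:ℝ) := by exact_mod_cast htn
    nlinarith
  have hq : 1 / (2 * (2 * (tn:ℝ) - 1)) = tt tn / 2 := by
    rw [tt]; rw [div_div]; ring_nf
  rw [probResBarbell]
  simp only [Matrix.of_apply, barbell, ne_eq, Fin.ext_iff]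
  split_ifs with h1 h2 h3 h4 h3 h4 h5 <;>
    first
    | (exfalso; omega)
    | ring1
    | (rw [pp]; ring1)
    | (rw [hq]; ring1)


lemma rowsum (tn : ℕ) (htn : 3 ≤ tn) (i : Fin (2*tn)) :
    ∑ j, probResBarbell tn i j =
      ((tn:ℝ) - 1) * pp tn
        + (if (i:ℕ) = tn - 1 ∨ (i:ℕ) = tn then tt tn / 2 else 0) := by
  simp_rw [prob_entry tn htn i]
  rw [Finset.sum_add_distrib]
  congr 1
  · -- clique part
    have h : ∀ j : Fin (2*tn), (if i ≠ j ∧ ((i:ℕ) < tn ↔ (j:ℕ) < tn) then pp tn else 0)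
        = (fun k => if (i:ℕ) ≠ k ∧ ((i:ℕ) < tn ↔ k < tn) then pp tn else 0) (j:ℕ) := by
      intro j; simp [Fin.ext_iff]
    simp_rw [h]
    rw [Fin.sum_univ_eq_sum_range (fun k => if (i:ℕ) ≠ k ∧ ((i:ℕ) < tn ↔ k < tn) then pp tn else 0) (2*tn)]
    rw [Finset.sum_ite, Finset.sum_const, Finset.sum_const, smul_zero, add_zero]
    have hcard : ((Finset.range (2*tn)).filter
        (fun k => (i:ℕ) ≠ k ∧ ((i:ℕ) < tn ↔ k < tn))).card = tn - 1 := by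
      have hi := i.isLt
      by_cases hilt : (i:ℕ) < tn
      · have : (Finset.range (2*tn)).filter (fun k => (i:ℕ) ≠ k ∧ ((i:ℕ) < tn ↔ k < tn))
            = (Finset.range tn).erase (i:ℕ) := by
          ext k; simp only [Finset.mem_filter, Finset.mem_range, Finset.mem_erase, hilt, true_iff]
          constructor
          · rintro ⟨hk, hne, hiff⟩; omega
          · rintro ⟨hne, hk⟩; refine ⟨by omega, by omega, by omega⟩
        rw [this, Finset.card_erase_of_mem (by simpa using hilt), Finset.card_range]
      · have : (Finset.range (2*tn)).filter (fun k => (i:ℕ) ≠ k ∧ ((i:ℕ) < tn ↔ k < tn))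
            = (Finset.Ico tn (2*tn)).erase (i:ℕ) := by
          ext k; simp only [Finset.mem_filter, Finset.mem_range, Finset.mem_erase,
            Finset.mem_Ico, hilt, false_iff]
          constructor
          · rintro ⟨hk, hne, hiff⟩; omega
          · rintro ⟨hne, hk1, hk2⟩; refine ⟨by omega, by omega, by omega⟩
        rw [this, Finset.card_erase_of_mem (by simp [Finset.mem_Ico]; omega), Nat.card_Ico]
        omega
    rw [hcard, nsmul_eq_mul]
    congr 1
    have : (1:ℕ) ≤ tn := by omega
    push_cast [Nat.cast_sub this]
    ring
  · -- bridge part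
    by_cases h1 : (i:ℕ) = tn - 1
    · have h : ∀ j : Fin (2*tn),
          (if ((i:ℕ) = tn - 1 ∧ (j:ℕ) = tn) ∨ ((i:ℕ) = tn ∧ (j:ℕ) = tn - 1)
            then tt tn / 2 else 0) = (if (j:ℕ) = tn then tt tn / 2 else 0) := by
        intro j; split_ifs <;> first | rfl | omega
      simp_rw [h]
      rw [sum_eqk tn tn (by omega)]
      rw [if_pos (Or.inl h1)]
    · by_cases h2 : (i:ℕ) = tn
      · have h : ∀ j : Fin (2*tn),
            (if ((i:ℕ) = tn - 1 ∧ (j:ℕ) = tn) ∨ ((i:ℕ) = tn ∧ (j:ℕ) = tn - 1)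
              then tt tn / 2 else 0) = (if (j:ℕ) = tn - 1 then tt tn / 2 else 0) := by
          intro j; split_ifs <;> first | rfl | omega
        simp_rw [h]
        rw [sum_eqk tn (tn-1) (by omega)]
        rw [if_pos (Or.inr h2)]
      · have h : ∀ j : Fin (2*tn),
            (if ((i:ℕ) = tn - 1 ∧ (j:ℕ) = tn) ∨ ((i:ℕ) = tn ∧ (j:ℕ) = tn - 1)
              then tt tn / 2 else 0) = 0 := by
          intro j; split_ifs <;> first | rfl | omega
        simp_rw [h]
        rw [Finset.sum_const, smul_zero, if_neg (by tauto)]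


noncomputable def AA (tn : ℕ) : Matrix (Fin (2*tn)) (Fin 3) ℝ :=
  Matrix.of fun i k =>
    if k = 0 then (if (i:ℕ) < tn then pp tn else 0)
    else if k = 1 then (if (i:ℕ) < tn then 0 else pp tn)
    else (-(tt tn)/2) * (if (i:ℕ) = tn - 1 then 1 else if (i:ℕ) = tn then -1 else 0)

noncomputable def BB (tn : ℕ) : Matrix (Fin 3) (Fin (2*tn)) ℝ :=
  Matrix.of fun k j =>
    if k = 0 then (if (j:ℕ) < tn then 1 else 0)
    else if k = 1 then (if (j:ℕ) < tn then 0 else 1)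
    else (if (j:ℕ) = tn - 1 then 1 else if (j:ℕ) = tn then -1 else 0)

lemma htp (tn : ℕ) (htn : 3 ≤ tn) : (tn:ℝ) * pp tn = tt tn := by
  have h3 : (3:ℝ) ≤ (tn:ℝ) := by exact_mod_cast htn
  have h0 : (tn:ℝ) ≠ 0 := by nlinarith
  have h1 : 2*(tn:ℝ)-1 ≠ 0 := by nlinarith
  rw [pp, tt]
  field_simp

set_option maxHeartbeats 2000000 in
lemma decomp (tn : ℕ) (htn : 3 ≤ tn) :
    gossipResBarbell tn = (1 - tt tn) • 1 + AA tn * BB tn := by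
  have htp' := htp tn htn
  ext i j
  rw [gossipResBarbell]
  simp only [Matrix.add_apply, Matrix.sub_apply, Matrix.smul_apply, Matrix.one_apply,
    Matrix.diagonal_apply, Matrix.mul_apply, smul_eq_mul]
  rw [rowsum tn htn i, prob_entry tn htn i j, Fin.sum_univ_three]
  simp only [AA, BB, Matrix.of_apply,
    show ((0:Fin 3) = 0) = True by simp, show ((1:Fin 3) = 0) = False by decide,
    show ((1:Fin 3) = 1) = True by decide, show ((2:Fin 3) = 0) = False by decide,
    show ((2:Fin 3) = 1) = False by decide, if_true, if_false]
  simp only [Fin.ext_iff]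
  split_ifs <;>
    first
    | (exfalso; omega)
    | ring1
    | linear_combination htp'
    | linear_combination -htp'


lemma sum_ab (tn : ℕ) (a b : ℝ) :
    ∑ j : Fin (2*tn), (if (j:ℕ) < tn then a else b) = tn*a + tn*b := by
  have h : ∀ j : Fin (2*tn), (if (j:ℕ) < tn then a else b)
      = (if (j:ℕ) < tn then a else 0) + (if (j:ℕ) < tn then 0 else b) :=
    fun j => by split_ifs <;> ring
  simp_rw [h]
  rw [Finset.sum_add_distrib, sum_lt, sum_ge]

lemma sum_canon (tn : ℕ) (htn : 3 ≤ tn) (a b x y : ℝ) (f : Fin (2*tn) → ℝ)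
    (hf : ∀ j : Fin (2*tn), f j = (if (j:ℕ) < tn then a else b)
      + (if (j:ℕ) = tn - 1 then x else 0) + (if (j:ℕ) = tn then y else 0)) :
    ∑ j, f j = tn*a + tn*b + x + y := by
  simp_rw [hf]
  rw [Finset.sum_add_distrib, Finset.sum_add_distrib, sum_ab,
    sum_eqk tn (tn-1) (by omega), sum_eqk tn tn (by omega)]

lemma BA (tn : ℕ) (htn : 3 ≤ tn) :
    BB tn * AA tn =
      !![tt tn, 0, -(tt tn)/2; 0, tt tn, tt tn/2; pp tn, -(pp tn), -(tt tn)] := by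
  have htp' := htp tn htn
  ext k l
  fin_cases k <;> fin_cases l <;>
    simp only [Matrix.mul_apply, AA, BB, Matrix.of_apply, Fin.mk_zero, Fin.mk_one,
      show ((⟨2, by norm_num⟩ : Fin 3) = 2) from rfl,
      Matrix.cons_val', Matrix.cons_val_zero, Matrix.cons_val_one, Matrix.head_cons,
      Matrix.empty_val', Matrix.cons_val_fin_one, Matrix.head_fin_const,
      Matrix.cons_val_two, Matrix.tail_cons,
      show ((0:Fin 3) = 0) = True by simp, show ((1:Fin 3) = 0) = False by decide,
      show ((1:Fin 3) = 1) = True by decide, show ((2:Fin 3) = 0) = False by decide,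
      show ((2:Fin 3) = 1) = False by decide, if_true, if_false]
  · exact (sum_canon tn htn (pp tn) 0 0 0 _
      (fun j => by split_ifs <;> first | (exfalso; omega) | ring1)).trans
      (by linear_combination htp')
  · exact (sum_canon tn htn 0 0 0 0 _
      (fun j => by split_ifs <;> first | (exfalso; omega) | ring1)).trans (by ring1)
  · exact (sum_canon tn htn 0 0 (-(tt tn)/2) 0 _
      (fun j => by split_ifs <;> first | (exfalso; omega) | ring1)).trans (by ring1)
  · exact (sum_canon tn htn 0 0 0 0 _
      (fun j => by split_ifs <;> first | (exfalso; omega) | ring1)).trans (by ring1)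
  · exact (sum_canon tn htn 0 (pp tn) 0 0 _
      (fun j => by split_ifs <;> first | (exfalso; omega) | ring1)).trans
      (by linear_combination htp')
  · exact (sum_canon tn htn 0 0 0 (tt tn/2) _
      (fun j => by split_ifs <;> first | (exfalso; omega) | ring1)).trans (by ring1)
  · exact (sum_canon tn htn 0 0 (pp tn) 0 _
      (fun j => by split_ifs <;> first | (exfalso; omega) | ring1)).trans (by ring1)
  · exact (sum_canon tn htn 0 0 0 (-(pp tn)) _
      (fun j => by split_ifs <;> first | (exfalso; omega) | ring1)).trans (by ring1)
  · exact (sum_canon tn htn 0 0 (-(tt tn)/2) (-(tt tn)/2) _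
      (fun j => by split_ifs <;> first | (exfalso; omega) | ring1)).trans (by ring1)


lemma det3 (c p t : ℝ) :
    Matrix.det (c • (1 : Matrix (Fin 3) (Fin 3) ℝ)
        - !![t, 0, -t/2; 0, t, t/2; p, -p, -t])
      = (c - t) * (c^2 - (t^2 - p*t)) := by
  rw [Matrix.det_fin_three]
  simp [Matrix.smul_apply, Matrix.one_apply]
  ring

lemma eval_charpoly' {m : ℕ} (M : Matrix (Fin m) (Fin m) ℝ) (z : ℝ) :
    M.charpoly.eval z = (z • (1 : Matrix (Fin m) (Fin m) ℝ) - M).det := by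
  rw [Matrix.charpoly, eval_det, matPolyEquiv_charmatrix]
  congr 1
  simp only [Polynomial.eval_sub, Polynomial.eval_X, Polynomial.eval_C]
  congr 1
  ext i j
  simp [Matrix.scalar, Matrix.smul_apply, Matrix.one_apply, Matrix.diagonal_apply]

lemma det_main (tn : ℕ) (htn : 3 ≤ tn) (z : ℝ) (hz : z ≠ 1 - tt tn) :
    (z • (1 : Matrix (Fin (2*tn)) (Fin (2*tn)) ℝ) - gossipResBarbell tn).det
      = (z - (1 - tt tn))^(2*tn-3) * ((z - 1)
          * ((z - (1 - tt tn))^2 - ((tt tn)^2 - pp tn * tt tn))) := by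
  set c : ℝ := z - (1 - tt tn) with hc
  have hc0 : c ≠ 0 := sub_ne_zero.mpr hz
  have h1 : z • (1 : Matrix (Fin (2*tn)) (Fin (2*tn)) ℝ) - gossipResBarbell tn
      = c • 1 - AA tn * BB tn := by
    rw [decomp tn htn, hc]
    module
  rw [h1]
  have h2 : c • (1 : Matrix (Fin (2*tn)) (Fin (2*tn)) ℝ) - AA tn * BB tn
      = c • (1 + ((-c⁻¹) • AA tn) * BB tn) := by
    rw [Matrix.smul_mul, smul_add, smul_smul]
    have hcc : c * -c⁻¹ = -1 := by field_simp
    rw [hcc, neg_one_smul, ← sub_eq_add_neg]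
  rw [h2, Matrix.det_smul, Matrix.det_one_add_mul_comm, Matrix.mul_smul,
    neg_smul, ← sub_eq_add_neg]
  have h3 : (1 : Matrix (Fin 3) (Fin 3) ℝ) - c⁻¹ • (BB tn * AA tn)
      = c⁻¹ • (c • 1 - BB tn * AA tn) := by
    rw [smul_sub, smul_smul, inv_mul_cancel₀ hc0, one_smul]
  rw [h3, Matrix.det_smul, BA tn htn, det3 c (pp tn) (tt tn)]
  rw [Fintype.card_fin, Fintype.card_fin]
  have hpow : c ^ (2*tn) * (c⁻¹)^3 = c^(2*tn-3) := by
    rw [inv_pow, ← pow_sub₀ c hc0 (by omega : 3 ≤ 2*tn)]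
  rw [show z - 1 = c - tt tn from by rw [hc]; ring, ← hpow]
  ring


lemma prod_nu (m : ℕ) (hm : 6 ≤ m) (a b c d z : ℝ) :
    ∏ i : Fin m, (z - (if (i:ℕ) = 0 then a else if (i:ℕ) ≤ m - 3 then b
        else if (i:ℕ) = m - 2 then c else d))
      = (z - a) * ((z - c) * ((z - d) * (z - b)^(m-3))) := by
  rw [Fin.prod_univ_eq_prod_range
    (fun k => (z - (if k = 0 then a else if k ≤ m - 3 then b
        else if k = m - 2 then c else d))) m]
  rw [← Finset.mul_prod_erase (Finset.range m) _ (by simp; omega : 0 ∈ Finset.range m)]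
  rw [← Finset.mul_prod_erase _ _
    (by simp [Finset.mem_erase]; omega : m - 2 ∈ (Finset.range m).erase 0)]
  rw [← Finset.mul_prod_erase _ _
    (by simp [Finset.mem_erase]; omega : m - 1 ∈ ((Finset.range m).erase 0).erase (m-2))]
  have h0 : (if (0:ℕ) = 0 then a else if 0 ≤ m - 3 then b else if 0 = m - 2 then c else d) = a := by
    simp
  have h2 : (if m - 2 = 0 then a else if m - 2 ≤ m - 3 then b else if m - 2 = m - 2 then c else d)
      = c := by rw [if_neg (by omega), if_neg (by omega), if_pos rfl]
  have h1 : (if m - 1 = 0 then a else if m - 1 ≤ m - 3 then b else if m - 1 = m - 2 then c else d)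
      = d := by rw [if_neg (by omega), if_neg (by omega), if_neg (by omega)]
  rw [h0, h2, h1]
  have hrest : ∀ k ∈ (((Finset.range m).erase 0).erase (m-2)).erase (m-1),
      (z - (if k = 0 then a else if k ≤ m - 3 then b else if k = m - 2 then c else d))
        = z - b := by
    intro k hk
    simp only [Finset.mem_erase, Finset.mem_range] at hk
    rw [if_neg (by omega), if_pos (by omega)]
  rw [Finset.prod_congr rfl hrest, Finset.prod_const]
  have hcard : ((((Finset.range m).erase 0).erase (m-2)).erase (m-1)).card = m - 3 := by
    rw [Finset.card_erase_of_mem (by simp [Finset.mem_erase]; omega),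
      Finset.card_erase_of_mem (by simp [Finset.mem_erase]; omega),
      Finset.card_erase_of_mem (by simp; omega), Finset.card_range]
    omega
  rw [hcard]

lemma mono_eq_of_multiset {m : ℕ} (f g : Fin m → ℝ) (hf : Monotone f) (hg : Monotone g)
    (h : Multiset.map f Finset.univ.val = Multiset.map g Finset.univ.val) : f = g := by
  rw [Fin.univ_val_map, Fin.univ_val_map] at h
  have hperm : List.Perm (List.ofFn f) (List.ofFn g) := Multiset.coe_eq_coe.mp h
  have := List.Perm.eq_of_sortedLE
    (List.sortedLE_ofFn_iff.mpr hf) (List.sortedLE_ofFn_iff.mpr hg) hperm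
  exact List.ofFn_injective this

end BarbellAux

open BarbellAux Polynomial in
theorem stmt7 (tn : ℕ) (htn : 3 ≤ tn) (n : ℝ) (hn : n = 2 * (tn : ℝ))
    (Snr : ℝ) (hSnr : Snr = (4 * n - 8) / (n * (n - 1) ^ 2)) :
    ∀ μ : Fin (2 * tn) → ℝ, Monotone μ →
      (gossipResBarbell tn).charpoly =
        ∏ i : Fin (2 * tn), (Polynomial.X - Polynomial.C (μ i)) →
      μ ⟨2 * tn - 2, by omega⟩ = 1 - 1 / (n - 1) + (1 / 2) * Real.sqrt Snr := by
  intro μ hμ hchar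
  have htn6 : 6 ≤ 2 * tn := by omega
  have htnR : (3:ℝ) ≤ (tn:ℝ) := by exact_mod_cast htn
  have h6 : (6:ℝ) ≤ n := by rw [hn]; linarith
  have hn1 : n - 1 ≠ 0 := by nlinarith
  have hn0 : n ≠ 0 := by nlinarith
  have htval : tt tn = 1 / (n - 1) := by rw [tt, hn]
  have hpval : pp tn = 2 / (n * (n - 1)) := by rw [pp, hn]
  have ht_nonneg : 0 ≤ tt tn := by rw [htval]; apply div_nonneg zero_le_one (by linarith)
  have hp_nonneg : 0 ≤ pp tn := by rw [hpval]; apply div_nonneg (by norm_num) (by nlinarith)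
  set s : ℝ := Real.sqrt Snr / 2 with hs
  have hSnr_nonneg : 0 ≤ Snr := by
    rw [hSnr]
    apply div_nonneg (by linarith)
    nlinarith
  have hs_sq : s ^ 2 = (tt tn) ^ 2 - pp tn * tt tn := by
    have h1 : s ^ 2 = Snr / 4 := by
      rw [hs, div_pow, Real.sq_sqrt hSnr_nonneg]; norm_num
    rw [h1, hSnr, htval, hpval]
    field_simp
    ring
  have hs_nonneg : 0 ≤ s := by
    rw [hs]; positivity
  have hs_le_t : s ≤ tt tn := by
    have h1 : s ^ 2 ≤ (tt tn) ^ 2 := by nlinarith [mul_nonneg hp_nonneg ht_nonneg]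
    nlinarith
  set ν : Fin (2*tn) → ℝ := fun i =>
    if (i:ℕ) = 0 then 1 - tt tn - s else if (i:ℕ) ≤ 2*tn - 3 then 1 - tt tn
    else if (i:ℕ) = 2*tn - 2 then 1 - tt tn + s else 1 with hν
  have hcharν : (gossipResBarbell tn).charpoly
      = ∏ i : Fin (2*tn), (Polynomial.X - Polynomial.C (ν i)) := by
    apply Polynomial.eq_of_infinite_eval_eq
    have hinf : ({(1 - tt tn)}ᶜ : Set ℝ).Infinite :=
      Set.Finite.infinite_compl (Set.finite_singleton _)
    apply Set.Infinite.mono _ hinf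
    intro z hz
    have hz' : z ≠ 1 - tt tn := by simpa using hz
    show Polynomial.eval z _ = Polynomial.eval z _
    rw [eval_charpoly', det_main tn htn z hz', Polynomial.eval_prod]
    simp only [Polynomial.eval_sub, Polynomial.eval_X, Polynomial.eval_C, hν]
    rw [prod_nu (2*tn) htn6 (1 - tt tn - s) (1 - tt tn) (1 - tt tn + s) 1 z]
    set K := (z - (1 - tt tn)) ^ (2*tn - 3) with hK
    linear_combination ((z-1) * K) * hs_sq
  have hmono : Monotone ν := by
    intro i j hij
    have hv : (i:ℕ) ≤ (j:ℕ) := hij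
    have hi := i.isLt
    have hj := j.isLt
    simp only [hν]
    split_ifs <;> first | (exfalso; omega) | linarith
  have hprodform : ∀ f : Fin (2*tn) → ℝ,
      (∏ i, (Polynomial.X - Polynomial.C (f i)))
        = ((Finset.univ.val.map f).map (fun a => Polynomial.X - Polynomial.C a)).prod := by
    intro f
    rw [Multiset.map_map, Finset.prod_eq_multiset_prod]
    rfl
  have hmultiset : Multiset.map μ Finset.univ.val = Multiset.map ν Finset.univ.val := by
    have h1 : (∏ i, (Polynomial.X - Polynomial.C (μ i)))
        = ∏ i, (Polynomial.X - Polynomial.C (ν i)) := by rw [← hchar, hcharν]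
    rw [hprodform μ, hprodform ν] at h1
    have h2 := congrArg Polynomial.roots h1
    rwa [Polynomial.roots_multiset_prod_X_sub_C, Polynomial.roots_multiset_prod_X_sub_C] at h2
  have hμν : μ = ν := mono_eq_of_multiset μ ν hμ hmono hmultiset
  have hfin := congrFun hμν (⟨2*tn - 2, by omega⟩ : Fin (2*tn))
  rw [hfin]
  simp only [hν]
  rw [if_neg (by omega), if_neg (by omega), if_pos trivial, htval, hs]
  ring
end

section
/- Let c ≥ 2, ñ ≥ 3, n = cñ, and let G be the c-barbell graph. Let W be an n×n symmetric matrix with nonnegative entries and all row sums equal to 1, such that W_{ij} > 0 whenever (i,j) is an edge of G and W_{ij} = 0 whenever i ≠ j are not adjacent in G. Suppose S₀ ⊆ {1,…,n} is nonempty with |S₀| ≤ n/2 and its complement can be written as the disjoint union of two nonempty sets C₁ and C₂ such that each of C₁ and C₂ induces a connected subgraph of G and no edge of G joins C₁ to C₂. Then there exists a nonempty proper subset S̃ of {1,…,n} with Φ_{S̃}(W) < Φ_{S₀}(W), where Φ_S(W) = (1/|S|)·Σ_{i∈S, j∉S} W_{ij}. -/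
open Matrix BigOperators Finset

/-- The subset conductance `Φ_S(W) = (1/|S|) Σ_{i∈S, j∉S} W_{ij}`. -/
noncomputable def subsetConductance {n : ℕ} (W : Matrix (Fin n) (Fin n) ℝ)
    (S : Finset (Fin n)) : ℝ :=
  (∑ i ∈ S, ∑ j ∈ Sᶜ, W i j) / (S.card : ℝ)


private lemma exists_boundary (P : ℕ → Prop) :
    ∀ b a, a ≤ b → P a → ¬P b → ∃ k, a ≤ k ∧ k + 1 ≤ b ∧ P k ∧ ¬P (k+1) := by
  intro b
  induction b with
  | zero => intro a ha hPa hPb; interval_cases a; exact absurd hPa hPb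
  | succ b ih =>
    intro a ha hPa hPb
    by_cases h : P b
    · have hab : a ≤ b := by
        by_contra h'
        have : a = b + 1 := by omega
        exact hPb (this ▸ hPa)
      exact ⟨b, hab, le_refl _, h, hPb⟩
    · have hab : a ≤ b := by
        by_contra h'
        have : a = b + 1 := by omega
        exact hPb (this ▸ hPa)
      obtain ⟨k, h1, h2, h3, h4⟩ := ih a hab hPa h
      exact ⟨k, h1, by omega, h3, h4⟩

private lemma consec_adj (c tn k : ℕ) (h0 : k < c * tn) (h : k + 1 < c * tn) :
    (cBarbell c tn).Adj ⟨k, h0⟩ ⟨k + 1, h⟩ := by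
  constructor
  · intro he
    have := congrArg Fin.val he
    simp only [Fin.val_mk] at this
    omega
  · by_cases hd : (k + 1) % tn = 0
    · exact Or.inr (Or.inl ⟨rfl, hd⟩)
    · left
      show k / tn = (k + 1) / tn
      rw [Nat.succ_div, if_neg (by omega : ¬ tn ∣ (k + 1)), Nat.add_zero]

private lemma exists_cross (c tn : ℕ) (S : Finset (Fin (c * tn)))
    (h1 : S.Nonempty) (h2 : Sᶜ.Nonempty) :
    ∃ i ∈ S, ∃ j ∈ Sᶜ, (cBarbell c tn).Adj i j := by
  obtain ⟨a, ha⟩ := h1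
  obtain ⟨b, hb⟩ := h2
  have hbS : b ∉ S := Finset.mem_compl.mp hb
  rcases le_or_gt a.val b.val with hab | hab
  · obtain ⟨k, hk1, hk2, hk3, hk4⟩ :=
      exists_boundary (fun m => ∀ h : m < c * tn, (⟨m, h⟩ : Fin (c * tn)) ∈ S) b.val a.val hab
        (fun h => by simpa using ha) (fun hp => hbS (by simpa using hp b.isLt))
    have hk1n : k + 1 < c * tn := lt_of_le_of_lt hk2 b.isLt
    have hkn : k < c * tn := Nat.lt_of_succ_lt hk1n
    refine ⟨⟨k, hkn⟩, hk3 hkn, ⟨k + 1, hk1n⟩, Finset.mem_compl.mpr ?_, consec_adj c tn k hkn hk1n⟩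
    intro hmem
    exact hk4 (fun h => hmem)
  · obtain ⟨k, hk1, hk2, hk3, hk4⟩ :=
      exists_boundary (fun m => ∀ h : m < c * tn, (⟨m, h⟩ : Fin (c * tn)) ∉ S) a.val b.val hab.le
        (fun h => by simpa using hbS) (fun hp => (hp a.isLt) (by simpa using ha))
    have hk1n : k + 1 < c * tn := lt_of_le_of_lt hk2 a.isLt
    have hkn : k < c * tn := Nat.lt_of_succ_lt hk1n
    have hmem : (⟨k + 1, hk1n⟩ : Fin (c * tn)) ∈ S := by
      by_contra hcon
      exact hk4 (fun h => hcon)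
    exact ⟨⟨k + 1, hk1n⟩, hmem, ⟨k, hkn⟩, Finset.mem_compl.mpr (hk3 hkn),
      (consec_adj c tn k hkn hk1n).symm⟩

/-- If the complement of `S₀` splits into two nonempty connected pieces with no edges between
them (a "two-cut set"), then some nonempty proper subset has strictly smaller conductance. -/
theorem stmt10 (c tn : ℕ) (hc : 2 ≤ c) (htn : 3 ≤ tn)
    (W : Matrix (Fin (c * tn)) (Fin (c * tn)) ℝ)
    (hsymm : W.IsSymm) (hnn : ∀ i j, 0 ≤ W i j) (hrow : ∀ i, ∑ j, W i j = 1)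
    (hpos : ∀ i j, (cBarbell c tn).Adj i j → 0 < W i j)
    (hzero : ∀ i j, i ≠ j → ¬(cBarbell c tn).Adj i j → W i j = 0)
    (S0 C1 C2 : Finset (Fin (c * tn)))
    (hS0ne : S0.Nonempty) (hS0card : 2 * S0.card ≤ c * tn)
    (hC1ne : C1.Nonempty) (hC2ne : C2.Nonempty)
    (hdisj : Disjoint C1 C2) (hunion : S0ᶜ = C1 ∪ C2)
    (hC1conn : ((cBarbell c tn).induce (C1 : Set (Fin (c * tn)))).Connected)
    (hC2conn : ((cBarbell c tn).induce (C2 : Set (Fin (c * tn)))).Connected)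
    (hnoedge : ∀ i ∈ C1, ∀ j ∈ C2, ¬(cBarbell c tn).Adj i j) :
    ∃ St : Finset (Fin (c * tn)), St.Nonempty ∧ St ≠ Finset.univ ∧
      subsetConductance W St < subsetConductance W S0 := by
  have htn0 : 0 < tn := by omega
  have hC2sub : ∀ x ∈ C2, x ∉ S0 := fun x hx =>
    Finset.mem_compl.mp (hunion ▸ Finset.mem_union_right _ hx)
  have hdS0C2 : Disjoint S0 C2 := Finset.disjoint_right.mpr hC2sub
  have hcompl : (S0 ∪ C2)ᶜ = C1 := by
    ext x
    have hx : x ∈ S0ᶜ ↔ x ∈ C1 ∪ C2 := by rw [hunion]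
    simp only [Finset.mem_compl, Finset.mem_union] at hx ⊢
    have hd : x ∈ C1 → x ∉ C2 := fun h => Finset.disjoint_left.mp hdisj h
    tauto
  refine ⟨S0 ∪ C2, hS0ne.mono Finset.subset_union_left, ?_, ?_⟩
  · intro h
    obtain ⟨x, hx⟩ := hC1ne
    rw [← hcompl, h, Finset.compl_univ] at hx
    exact absurd hx (Finset.notMem_empty x)
  · unfold subsetConductance
    set A := ∑ i ∈ S0, ∑ j ∈ C1, W i j with hA
    set B := ∑ i ∈ S0, ∑ j ∈ C2, W i j with hB
    have hAnn : 0 ≤ A := Finset.sum_nonneg fun i _ => Finset.sum_nonneg fun j _ => hnn i j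
    have hBnn : 0 ≤ B := Finset.sum_nonneg fun i _ => Finset.sum_nonneg fun j _ => hnn i j
    have hS0cut : ∑ i ∈ S0, ∑ j ∈ S0ᶜ, W i j = A + B := by
      rw [hunion]
      rw [show (∑ i ∈ S0, ∑ j ∈ C1 ∪ C2, W i j) =
        ∑ i ∈ S0, ((∑ j ∈ C1, W i j) + ∑ j ∈ C2, W i j) from
        Finset.sum_congr rfl fun i _ => Finset.sum_union hdisj]
      exact Finset.sum_add_distrib
    have hcut2 : ∑ i ∈ S0 ∪ C2, ∑ j ∈ (S0 ∪ C2)ᶜ, W i j = A := by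
      rw [hcompl, Finset.sum_union hdS0C2]
      have hz : ∑ i ∈ C2, ∑ j ∈ C1, W i j = 0 :=
        Finset.sum_eq_zero fun i hi => Finset.sum_eq_zero fun j hj =>
          hzero i j (fun h => Finset.disjoint_left.mp hdisj hj (h ▸ hi))
            (fun hadj => hnoedge j hj i hi hadj.symm)
      rw [hz, add_zero]
    have hcard : (S0 ∪ C2).card = S0.card + C2.card := Finset.card_union_of_disjoint hdS0C2
    have hS0cne : S0ᶜ.Nonempty := by
      rw [hunion]; exact hC1ne.mono Finset.subset_union_left
    obtain ⟨i, hi, j, hj, hadj⟩ := exists_cross c tn S0 hS0ne hS0cne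
    have hcutpos : 0 < ∑ i ∈ S0, ∑ j ∈ S0ᶜ, W i j :=
      Finset.sum_pos' (fun i _ => Finset.sum_nonneg fun j _ => hnn i j)
        ⟨i, hi, Finset.sum_pos' (fun j _ => hnn i j) ⟨j, hj, hpos i j hadj⟩⟩
    rw [hS0cut] at hcutpos
    rw [hS0cut, hcut2, hcard]
    have hs : (0:ℝ) < S0.card := by exact_mod_cast hS0ne.card_pos
    have hc2 : (0:ℝ) < C2.card := by exact_mod_cast hC2ne.card_pos
    push_cast
    rw [div_lt_div_iff₀ (by linarith) hs]
    nlinarith [mul_pos hcutpos hc2, mul_nonneg hBnn hs.le, mul_nonneg hAnn hc2.le]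
end
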